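/- The vector fields χ1 = cos v cos y ∂x + cos v tan x sin y ∂y + sin v tan x sec y ∂v, χ3 = sin y ∂x − tan x cos y ∂y, and χ4 = cos v ∂y + sin v tan y ∂v satisfy [χ1, χ3] = −χ4, [χ1, χ4] = χ3, and [χ3, χ4] = −χ1, so their span is a Lie subalgebra. -/

import Mathlib

noncomputable section
open Real

/-- Partial derivative in the first coordinate x. -/
def Dx (g : ℝ → ℝ → ℝ → ℝ) (x y v : ℝ) : ℝ := deriv (fun t => g t y v) x
/-- Partial derivative in the second coordinate y. -/
def Dy (g : ℝ → ℝ → ℝ → ℝ) (x y v : ℝ) : ℝ := deriv (fun t => g x t v) y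
/-- Partial derivative in the third coordinate v. -/
def Dv (g : ℝ → ℝ → ℝ → ℝ) (x y v : ℝ) : ℝ := deriv (fun t => g x y t) v

/-- Directional derivative of g along the vector field (X1, X2, X3). -/
def dirD (X1 X2 X3 g : ℝ → ℝ → ℝ → ℝ) (x y v : ℝ) : ℝ :=
  X1 x y v * Dx g x y v + X2 x y v * Dy g x y v + X3 x y v * Dv g x y v

/-- Componentwise Lie bracket [A, B]ⁱ = Σⱼ (Aʲ ∂ⱼBⁱ − Bʲ ∂ⱼAⁱ). -/
def lieB (A1 A2 A3 B1 B2 B3 : ℝ → ℝ → ℝ → ℝ) (x y v : ℝ) : ℝ × ℝ × ℝ :=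
  (dirD A1 A2 A3 B1 x y v - dirD B1 B2 B3 A1 x y v,
   dirD A1 A2 A3 B2 x y v - dirD B1 B2 B3 A2 x y v,
   dirD A1 A2 A3 B3 x y v - dirD B1 B2 B3 A3 x y v)

def chi1₁ : ℝ → ℝ → ℝ → ℝ := fun _ y v => cos v * cos y
def chi1₂ : ℝ → ℝ → ℝ → ℝ := fun x y v => cos v * tan x * sin y
def chi1₃ : ℝ → ℝ → ℝ → ℝ := fun x y v => sin v * tan x * (cos y)⁻¹

def chi2₁ : ℝ → ℝ → ℝ → ℝ := fun _ y v => sin v * cos y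
def chi2₂ : ℝ → ℝ → ℝ → ℝ := fun x y v => sin v * tan x * sin y
def chi2₃ : ℝ → ℝ → ℝ → ℝ := fun x y v => -(cos v * tan x * (cos y)⁻¹)

def chi3₁ : ℝ → ℝ → ℝ → ℝ := fun _ y _ => sin y
def chi3₂ : ℝ → ℝ → ℝ → ℝ := fun x y _ => -(tan x * cos y)
def chi3₃ : ℝ → ℝ → ℝ → ℝ := fun _ _ _ => 0

def chi4₁ : ℝ → ℝ → ℝ → ℝ := fun _ _ _ => 0
def chi4₂ : ℝ → ℝ → ℝ → ℝ := fun _ _ v => cos v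
def chi4₃ : ℝ → ℝ → ℝ → ℝ := fun _ y v => sin v * tan y

def chi5₁ : ℝ → ℝ → ℝ → ℝ := fun _ _ _ => 0
def chi5₂ : ℝ → ℝ → ℝ → ℝ := fun _ _ v => sin v
def chi5₃ : ℝ → ℝ → ℝ → ℝ := fun _ y v => -(cos v * tan y)

def chi6₁ : ℝ → ℝ → ℝ → ℝ := fun _ _ _ => 0
def chi6₂ : ℝ → ℝ → ℝ → ℝ := fun _ _ _ => 0
def chi6₃ : ℝ → ℝ → ℝ → ℝ := fun _ _ _ => 1

lemma dinv (y : ℝ) (hy : cos y ≠ 0) : deriv (fun t => (cos t)⁻¹) y = sin y / cos y ^ 2 := by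
  have h := ((Real.hasDerivAt_cos y).inv hy).deriv
  rw [show (fun t => (cos t)⁻¹) = cos⁻¹ from rfl, h]; ring

set_option maxHeartbeats 2000000 in
theorem chi1_chi3_chi4_subalgebra (x y v : ℝ) (hx : cos x ≠ 0) (hy : cos y ≠ 0) :
    lieB chi1₁ chi1₂ chi1₃ chi3₁ chi3₂ chi3₃ x y v =
      (-(chi4₁ x y v), -(chi4₂ x y v), -(chi4₃ x y v)) ∧
    lieB chi1₁ chi1₂ chi1₃ chi4₁ chi4₂ chi4₃ x y v =
      (chi3₁ x y v, chi3₂ x y v, chi3₃ x y v) ∧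
    lieB chi3₁ chi3₂ chi3₃ chi4₁ chi4₂ chi4₃ x y v =
      (-(chi1₁ x y v), -(chi1₂ x y v), -(chi1₃ x y v)) := by
  have d11x : Dx chi1₁ x y v = 0 := by simp [Dx, chi1₁]
  have d11y : Dy chi1₁ x y v = -(cos v * sin y) := by simp [Dy, chi1₁, deriv_const_mul_field]
  have d11v : Dv chi1₁ x y v = -(sin v * cos y) := by simp [Dv, chi1₁, deriv_mul_const_field]
  have d12x : Dx chi1₂ x y v = cos v * (1 / cos x ^ 2) * sin y := by
    simp [Dx, chi1₂, deriv_mul_const_field, deriv_const_mul_field, Real.deriv_tan]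
  have d12y : Dy chi1₂ x y v = cos v * tan x * cos y := by
    simp [Dy, chi1₂, deriv_const_mul_field]
  have d12v : Dv chi1₂ x y v = -(sin v * tan x * sin y) := by
    simp [Dv, chi1₂, deriv_mul_const_field]
  have d13x : Dx chi1₃ x y v = sin v * (1 / cos x ^ 2) * (cos y)⁻¹ := by
    simp [Dx, chi1₃, deriv_mul_const_field, deriv_const_mul_field, Real.deriv_tan]
  have d13y : Dy chi1₃ x y v = sin v * tan x * (sin y / cos y ^ 2) := by
    simp [Dy, chi1₃, deriv_const_mul_field, dinv y hy]
  have d13v : Dv chi1₃ x y v = cos v * tan x * (cos y)⁻¹ := by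
    simp [Dv, chi1₃, deriv_mul_const_field]
  have d31x : Dx chi3₁ x y v = 0 := by simp [Dx, chi3₁]
  have d31y : Dy chi3₁ x y v = cos y := by simp [Dy, chi3₁]
  have d31v : Dv chi3₁ x y v = 0 := by simp [Dv, chi3₁]
  have d32x : Dx chi3₂ x y v = -((1 / cos x ^ 2) * cos y) := by
    simp [Dx, chi3₂, deriv_mul_const_field, Real.deriv_tan]
  have d32y : Dy chi3₂ x y v = tan x * sin y := by
    simp [Dy, chi3₂, deriv_const_mul_field]
  have d32v : Dv chi3₂ x y v = 0 := by simp [Dv, chi3₂]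
  have d33x : Dx chi3₃ x y v = 0 := by simp [Dx, chi3₃]
  have d33y : Dy chi3₃ x y v = 0 := by simp [Dy, chi3₃]
  have d33v : Dv chi3₃ x y v = 0 := by simp [Dv, chi3₃]
  have d41x : Dx chi4₁ x y v = 0 := by simp [Dx, chi4₁]
  have d41y : Dy chi4₁ x y v = 0 := by simp [Dy, chi4₁]
  have d41v : Dv chi4₁ x y v = 0 := by simp [Dv, chi4₁]
  have d42x : Dx chi4₂ x y v = 0 := by simp [Dx, chi4₂]
  have d42y : Dy chi4₂ x y v = 0 := by simp [Dy, chi4₂]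
  have d42v : Dv chi4₂ x y v = -sin v := by simp [Dv, chi4₂]
  have d43x : Dx chi4₃ x y v = 0 := by simp [Dx, chi4₃]
  have d43y : Dy chi4₃ x y v = sin v * (1 / cos y ^ 2) := by
    simp [Dy, chi4₃, deriv_const_mul_field, Real.deriv_tan]
  have d43v : Dv chi4₃ x y v = cos v * tan y := by
    simp [Dv, chi4₃, deriv_mul_const_field]
  have hsx : sin x ^ 2 = 1 - cos x ^ 2 := by linarith [sin_sq_add_cos_sq x]
  have hsy : sin y ^ 2 = 1 - cos y ^ 2 := by linarith [sin_sq_add_cos_sq y]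
  have hsv : sin v ^ 2 = 1 - cos v ^ 2 := by linarith [sin_sq_add_cos_sq v]
  refine ⟨?_, ?_, ?_⟩ <;>
    simp only [lieB, dirD, d11x, d11y, d11v, d12x, d12y, d12v, d13x, d13y, d13v,
      d31x, d31y, d31v, d32x, d32y, d32v, d33x, d33y, d33v,
      d41x, d41y, d41v, d42x, d42y, d42v, d43x, d43y, d43v,
      chi1₁, chi1₂, chi1₃, chi3₁, chi3₂, chi3₃, chi4₁, chi4₂, chi4₃, Prod.mk.injEq,
      Real.tan_eq_sin_div_cos] <;>
    refine ⟨?_, ?_, ?_⟩ <;> field_simp <;> ring_nf <;>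
    first
      | tauto
      | (simp only [hsx, hsy, hsv]; ring)

end
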